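/- On any binary DAG with n vertices (every vertex has indegree at most 2) with a unique sink reachable from all vertices, the git bisect algorithm uses at most log₂(n)/log₂(3/2) queries in the worst case to identify the faulty vertex. -/

import Mathlib

/-- A strategy is a binary decision tree: internal nodes are queried vertices,
leaves identify the faulty vertex. -/
inductive Strategy (V : Type) : Type where
  | leaf : V → Strategy V
  | node : V → Strategy V → Strategy V → Strategy V

namespace Strategy

/-- The worst-case number of queries of a strategy is the height of the tree. -/
def height {V : Type} : Strategy V → ℕ
  | leaf _ => 0
  | node _ l r => 1 + max l.height r.height

open Classical in
/-- Running a strategy: `anc u v` means `u` is an ancestor of `v` (including `u = v`).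
A query of `q` answers "bugged" (left subtree) iff the faulty vertex `f` is an ancestor
of `q`, and "clean" (right subtree) otherwise. The result is the vertex identified at
the reached leaf. -/
noncomputable def run {V : Type} (anc : V → V → Prop) : Strategy V → V → V
  | leaf v, _ => v
  | node q l r, f => if anc f q then run anc l f else run anc r f

end Strategy


/-- The score of `x` within the candidate set `C`: the minimum of the number of
candidates that are ancestors of `x` and the number that are not. -/
noncomputable def scoreIn {V : Type} (anc : V → V → Prop) (C : Set V) (x : V) : ℕ :=
  min ((C ∩ {u | anc u x}).ncard) ((C \ {u | anc u x}).ncard)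

/-- `IsGB anc C s`: the strategy `s` is a possible run of the git bisect algorithm on
the candidate set `C`.  At each step a candidate of maximum score is queried, and the
candidate set is restricted to the ancestors (bugged answer) or non-ancestors (clean
answer) of the queried vertex; the algorithm stops when a single candidate remains. -/
inductive IsGB {V : Type} (anc : V → V → Prop) : Set V → Strategy V → Prop where
  | leaf (v : V) : IsGB anc {v} (Strategy.leaf v)
  | node (C : Set V) (q : V) (l r : Strategy V)
      (hq : q ∈ C)
      (hmax : ∀ x ∈ C, scoreIn anc C x ≤ scoreIn anc C q)
      (hl : IsGB anc (C ∩ {u | anc u q}) l)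
      (hr : IsGB anc (C \ {u | anc u q}) r) :
      IsGB anc C (Strategy.node q l r)

section Aux
open Relation
variable {V : Type} [Fintype V] {E : V → V → Prop}

/-- ancestors-in-C count -/
noncomputable def aC (E : V → V → Prop) (C : Set V) (x : V) : ℕ :=
  (C ∩ {u | ReflTransGen E u x}).ncard

lemma exists_parent (hacyc : ∀ v : V, ¬ Relation.TransGen E v v)
    (hbin : ∀ v : V, {u | E u v}.ncard ≤ 2)
    {C : Set V} (hconv : ∀ u w x, u ∈ C → x ∈ C → ReflTransGen E u w → ReflTransGen E w x → w ∈ C)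
    {x : V} (hx : x ∈ C) (h2 : 2 ≤ aC E C x) :
    ∃ w ∈ C, E w x ∧ aC E C x ≤ 2 * aC E C w + 1 ∧ aC E C w < aC E C x := by
  classical
  set P : Set V := {w | w ∈ C ∧ E w x} with hP
  -- every parent w in P has Anc-set strictly inside
  have hsub : ∀ w ∈ P, C ∩ {u | ReflTransGen E u w} ⊆ (C ∩ {u | ReflTransGen E u x}) \ {x} := by
    rintro w ⟨hwC, hwE⟩ u ⟨huC, huw⟩
    refine ⟨⟨huC, huw.tail hwE⟩, ?_⟩
    simp only [Set.mem_singleton_iff]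
    rintro rfl
    exact hacyc _ (Relation.TransGen.tail' huw hwE)
  have hlt : ∀ w ∈ P, aC E C w < aC E C x := by
    intro w hw
    have h1 : aC E C w ≤ ((C ∩ {u | ReflTransGen E u x}) \ {x}).ncard :=
      Set.ncard_le_ncard (hsub w hw) (Set.toFinite _)
    have h2' : ((C ∩ {u | ReflTransGen E u x}) \ {x}).ncard
        = (C ∩ {u | ReflTransGen E u x}).ncard - 1 :=
      Set.ncard_diff_singleton_of_mem ⟨hx, ReflTransGen.refl⟩
    unfold aC at *
    omega
  -- cover
  have hcover : C ∩ {u | ReflTransGen E u x} ⊆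
      insert x (⋃ w ∈ P, C ∩ {u | ReflTransGen E u w}) := by
    rintro u ⟨huC, hux⟩
    by_cases hux' : u = x
    · exact Set.mem_insert_iff.mpr (Or.inl hux')
    · rcases (hux : ReflTransGen E u x).cases_tail with h | ⟨c, huc, hcx⟩
      · exact absurd h.symm hux'
      · have hcC : c ∈ C := hconv u c x huC hx huc (ReflTransGen.single hcx)
        refine Set.mem_insert_of_mem _ ?_
        exact Set.mem_biUnion (show c ∈ P from ⟨hcC, hcx⟩) ⟨huC, huc⟩
  -- P nonempty
  have hPne : P.Nonempty := by
    obtain ⟨u, ⟨huC, hux⟩, hne⟩ := Set.exists_ne_of_one_lt_ncard h2 x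
    rcases (hux : ReflTransGen E u x).cases_tail with h | ⟨c, huc, hcx⟩
    · exact absurd h.symm hne
    · exact ⟨c, hconv u c x huC hx huc (ReflTransGen.single hcx), hcx⟩
  have hPcard : P.ncard ≤ 2 := by
    refine le_trans (Set.ncard_le_ncard ?_ (Set.toFinite _)) (hbin x)
    rintro w ⟨_, hw⟩; exact hw
  have hP1 : 1 ≤ P.ncard := (Set.ncard_pos (Set.toFinite _)).mpr hPne
  -- case on P
  interval_cases h : P.ncard
  · obtain ⟨w, hw⟩ := Set.ncard_eq_one.mp h
    refine ⟨w, (hw ▸ Set.mem_singleton w : w ∈ P).1, (hw ▸ Set.mem_singleton w : w ∈ P).2, ?_, hlt w (hw ▸ Set.mem_singleton w)⟩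
    have : aC E C x ≤ aC E C w + 1 := by
      have := Set.ncard_le_ncard hcover (Set.toFinite _)
      calc aC E C x ≤ (insert x (⋃ w ∈ P, C ∩ {u | ReflTransGen E u w})).ncard := this
        _ ≤ (⋃ w' ∈ P, C ∩ {u | ReflTransGen E u w'}).ncard + 1 := Set.ncard_insert_le _ _
        _ = aC E C w + 1 := by rw [hw]; simp [aC]
    omega
  · obtain ⟨w₁, w₂, hne, hw⟩ := Set.ncard_eq_two.mp h
    have hw₁ : w₁ ∈ P := hw ▸ Set.mem_insert _ _
    have hw₂ : w₂ ∈ P := hw ▸ Set.mem_insert_of_mem _ (Set.mem_singleton _)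
    have hbound : aC E C x ≤ 1 + aC E C w₁ + aC E C w₂ := by
      have h0 := Set.ncard_le_ncard hcover (Set.toFinite _)
      have h1 : (⋃ w' ∈ P, C ∩ {u | ReflTransGen E u w'}).ncard
          ≤ aC E C w₁ + aC E C w₂ := by
        rw [hw]
        calc (⋃ w' ∈ ({w₁, w₂} : Set V), C ∩ {u | ReflTransGen E u w'}).ncard
            = ((C ∩ {u | ReflTransGen E u w₁}) ∪ (C ∩ {u | ReflTransGen E u w₂})).ncard := by
              congr 1; simp [Set.biUnion_insert]
          _ ≤ _ := Set.ncard_union_le _ _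
      have h2' := Set.ncard_insert_le x (⋃ w' ∈ P, C ∩ {u | ReflTransGen E u w'})
      unfold aC at *
      omega
    rcases le_total (aC E C w₁) (aC E C w₂) with hc | hc
    · exact ⟨w₂, hw₂.1, hw₂.2, by omega, hlt w₂ hw₂⟩
    · exact ⟨w₁, hw₁.1, hw₁.2, by omega, hlt w₁ hw₁⟩

lemma walk_lemma (hacyc : ∀ v : V, ¬ Relation.TransGen E v v)
    (hbin : ∀ v : V, {u | E u v}.ncard ≤ 2)
    {C : Set V} (hconv : ∀ u w x, u ∈ C → x ∈ C → ReflTransGen E u w → ReflTransGen E w x → w ∈ C)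
    (hn : 2 ≤ C.ncard) :
    ∀ k (x : V), x ∈ C → aC E C x ≤ k → C.ncard ≤ 3 * aC E C x + 1 →
      ∃ z ∈ C, C.ncard ≤ 3 * aC E C z + 1 ∧ 3 * aC E C z ≤ 2 * C.ncard := by
  intro k
  induction k with
  | zero =>
    intro x hx hk hlow
    -- a x = 0 but x ∈ C ∩ Anc x, contradiction with n ≥ 2? a x = 0 impossible since x ∈ set
    exfalso
    have : 1 ≤ aC E C x := (Set.ncard_pos (Set.toFinite _)).mpr ⟨x, hx, ReflTransGen.refl⟩
    omega
  | succ k ih =>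
    intro x hx hk hlow
    by_cases hhi : 3 * aC E C x ≤ 2 * C.ncard
    · exact ⟨x, hx, hlow, hhi⟩
    · have h2 : 2 ≤ aC E C x := by omega
      obtain ⟨w, hwC, _, hwa, hwlt⟩ := exists_parent hacyc hbin hconv hx h2
      exact ih w hwC (by omega) (by omega)

lemma score_lemma (hacyc : ∀ v : V, ¬ Relation.TransGen E v v)
    (hbin : ∀ v : V, {u | E u v}.ncard ≤ 2)
    {C : Set V} (hconv : ∀ u w x, u ∈ C → x ∈ C → ReflTransGen E u w → ReflTransGen E w x → w ∈ C)
    (hsink : ∃ t ∈ C, ∀ u ∈ C, ReflTransGen E u t)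
    (hn : 2 ≤ C.ncard) :
    ∃ z ∈ C, C.ncard ≤ 3 * scoreIn (fun u v => ReflTransGen E u v) C z + 1 := by
  obtain ⟨t, htC, ht⟩ := hsink
  have hat : aC E C t = C.ncard := by
    unfold aC
    congr 1
    exact Set.inter_eq_self_of_subset_left (fun u hu => ht u hu)
  obtain ⟨z, hzC, hzlow, hzhi⟩ :=
    walk_lemma hacyc hbin hconv hn (C.ncard) t htC (by omega) (by omega)
  refine ⟨z, hzC, ?_⟩
  have hsplit : (C ∩ {u | ReflTransGen E u z}).ncard + (C \ {u | ReflTransGen E u z}).ncard = C.ncard :=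
    Set.ncard_inter_add_ncard_diff_eq_ncard C _ (Set.toFinite _)
  unfold scoreIn
  unfold aC at hzlow hzhi
  rcases le_total ((C ∩ {u | ReflTransGen E u z}).ncard) ((C \ {u | ReflTransGen E u z}).ncard) with h | h
  · rw [min_eq_left h]; omega
  · rw [min_eq_right h]; omega


lemma step_arith (h' n m : ℕ) (hn : 2 ≤ n) (hm0 : 1 ≤ m)
    (hm1 : 3 ^ h' ≤ 2 ^ h' * m)
    (hm2 : 5 ≤ h' → 3 ^ h' + 2 ^ h' ≤ 2 ^ h' * m)
    (h3 : 3 * m ≤ 2 * n + 1) :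
    3 ^ (h' + 1) ≤ 2 ^ (h' + 1) * n ∧
      (5 ≤ h' + 1 → 3 ^ (h' + 1) + 2 ^ (h' + 1) ≤ 2 ^ (h' + 1) * n) := by
  match h' with
  | 0 => norm_num; omega
  | 1 => norm_num at *; omega
  | 2 => norm_num at *; omega
  | 3 => norm_num at *; omega
  | 4 => norm_num at *; omega
  | (k+5) =>
    have h5 : 5 ≤ k + 5 := by omega
    have hA := hm2 h5
    set A := 3 ^ (k+5) with hAdef
    set B := 2 ^ (k+5) with hBdef
    have key : 3 * A + 3 * B ≤ 2 * (B * n) + B := by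
      calc 3 * A + 3 * B = 3 * (A + B) := by ring
        _ ≤ 3 * (B * m) := by omega
        _ = B * (3 * m) := by ring
        _ ≤ B * (2 * n + 1) := Nat.mul_le_mul_left _ h3
        _ = 2 * (B * n) + B := by ring
    have hgoal2 : 3 * A + 2 * B ≤ 2 * (B * n) := by omega
    constructor
    · have : 3 ^ (k+5+1) = 3 * A := by rw [hAdef]; ring
      rw [this]
      have : 2 ^ (k+5+1) * n = 2 * (B * n) := by rw [hBdef]; ring
      rw [this]
      omega
    · intro _
      have e1 : 3 ^ (k+5+1) = 3 * A := by rw [hAdef]; ring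
      have e2 : 2 ^ (k+5+1) = 2 * B := by rw [hBdef]; ring
      have e3 : 2 ^ (k+5+1) * n = 2 * (B * n) := by rw [hBdef]; ring
      rw [e1, e2]
      calc 3 * A + 2 * B ≤ 2 * (B * n) := hgoal2
        _ = 2 * B * n := by ring

lemma isGB_nonempty {anc : V → V → Prop} {C : Set V} {s : Strategy V}
    (h : IsGB anc C s) : C.Nonempty := by
  induction h with
  | leaf v => exact ⟨v, rfl⟩
  | node C q l r hq hmax hl hr ihl ihr => exact ⟨q, hq⟩

lemma main_bound (hacyc : ∀ v : V, ¬ Relation.TransGen E v v)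
    (hbin : ∀ v : V, {u | E u v}.ncard ≤ 2) :
    ∀ (s : Strategy V) (C : Set V), IsGB (fun u v => Relation.ReflTransGen E u v) C s →
      (∀ u w x, u ∈ C → x ∈ C → ReflTransGen E u w → ReflTransGen E w x → w ∈ C) →
      (∃ t ∈ C, ∀ u ∈ C, ReflTransGen E u t) →
      3 ^ s.height ≤ 2 ^ s.height * C.ncard ∧
        (5 ≤ s.height → 3 ^ s.height + 2 ^ s.height ≤ 2 ^ s.height * C.ncard) := by
  intro s
  induction s with
  | leaf v =>
    intro C hgb _ _
    cases hgb
    simp [Strategy.height]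
  | node q l r ihl ihr =>
    intro C hgb hconv hsink
    cases hgb with
    | node _ _ _ _ hq hmax hl hr =>
      set Cl := C ∩ {u | ReflTransGen E u q} with hCl
      set Cr := C \ {u | ReflTransGen E u q} with hCr
      have hClne : Cl.Nonempty := isGB_nonempty hl
      have hCrne : Cr.Nonempty := isGB_nonempty hr
      have hsplit : Cl.ncard + Cr.ncard = C.ncard :=
        Set.ncard_inter_add_ncard_diff_eq_ncard C _ (Set.toFinite _)
      have hCl1 : 1 ≤ Cl.ncard := (Set.ncard_pos (Set.toFinite _)).mpr hClne
      have hCr1 : 1 ≤ Cr.ncard := (Set.ncard_pos (Set.toFinite _)).mpr hCrne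
      have hn : 2 ≤ C.ncard := by omega
      -- invariants for left child
      have hconvl : ∀ u w x, u ∈ Cl → x ∈ Cl → ReflTransGen E u w → ReflTransGen E w x → w ∈ Cl := by
        rintro u w x ⟨huC, huq⟩ ⟨hxC, hxq⟩ huw hwx
        exact ⟨hconv u w x huC hxC huw hwx, hwx.trans hxq⟩
      have hsinkl : ∃ t ∈ Cl, ∀ u ∈ Cl, ReflTransGen E u t :=
        ⟨q, ⟨hq, ReflTransGen.refl⟩, fun u hu => hu.2⟩
      -- invariants for right child
      have hconvr : ∀ u w x, u ∈ Cr → x ∈ Cr → ReflTransGen E u w → ReflTransGen E w x → w ∈ Cr := by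
        rintro u w x ⟨huC, huq⟩ ⟨hxC, hxq⟩ huw hwx
        refine ⟨hconv u w x huC hxC huw hwx, fun hwq => huq (huw.trans hwq)⟩
      have hsinkr : ∃ t ∈ Cr, ∀ u ∈ Cr, ReflTransGen E u t := by
        obtain ⟨t, htC, ht⟩ := hsink
        have htq : ¬ ReflTransGen E t q := by
          intro htq
          obtain ⟨u, huC, huq⟩ := hCrne
          exact huq ((ht u huC).trans htq)
        exact ⟨t, ⟨htC, htq⟩, fun u hu => ht u hu.1⟩
      -- score of the queried vertex
      obtain ⟨z, hzC, hz⟩ := score_lemma hacyc hbin hconv hsink hn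
      have hzq : C.ncard ≤ 3 * scoreIn (fun u v => ReflTransGen E u v) C q + 1 := by
        have := hmax z hzC
        omega
      have hsq : scoreIn (fun u v => ReflTransGen E u v) C q = min Cl.ncard Cr.ncard := rfl
      have hbl : 3 * Cl.ncard ≤ 2 * C.ncard + 1 := by
        rw [hsq] at hzq
        rcases le_total Cl.ncard Cr.ncard with h | h
        · rw [min_eq_left h] at hzq; omega
        · rw [min_eq_right h] at hzq; omega
      have hbr : 3 * Cr.ncard ≤ 2 * C.ncard + 1 := by
        rw [hsq] at hzq
        rcases le_total Cl.ncard Cr.ncard with h | h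
        · rw [min_eq_left h] at hzq; omega
        · rw [min_eq_right h] at hzq; omega
      obtain ⟨ihl1, ihl2⟩ := ihl Cl hl hconvl hsinkl
      obtain ⟨ihr1, ihr2⟩ := ihr Cr hr hconvr hsinkr
      have hheight : (Strategy.node q l r).height = max l.height r.height + 1 := by
        simp [Strategy.height]; omega
      rw [hheight]
      rcases le_total l.height r.height with h | h
      · rw [max_eq_right h]
        exact step_arith r.height C.ncard Cr.ncard hn hCr1 ihr1 ihr2 hbr
      · rw [max_eq_left h]
        exact step_arith l.height C.ncard Cl.ncard hn hCl1 ihl1 ihl2 hbl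



end Aux

/-- On any binary DAG with `n` vertices and a unique sink reachable from all vertices,
every run of the git bisect algorithm uses at most `log₂ n / log₂ (3/2)` queries in the
worst case. -/
theorem gitbisect_binary_bound {V : Type} [Fintype V] [Nonempty V] (E : V → V → Prop)
    (hacyc : ∀ v : V, ¬ Relation.TransGen E v v)
    (hbin : ∀ v : V, {u | E u v}.ncard ≤ 2)
    (b : V) (hb : ∀ v : V, Relation.ReflTransGen E v b)
    (s : Strategy V)
    (hs : IsGB (fun u v => Relation.ReflTransGen E u v) Set.univ s) :
    (s.height : ℝ) ≤ Real.logb 2 (Fintype.card V) / Real.logb 2 (3 / 2) := by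
  have hconv : ∀ u w x : V, u ∈ (Set.univ : Set V) → x ∈ (Set.univ : Set V) →
      Relation.ReflTransGen E u w → Relation.ReflTransGen E w x → w ∈ (Set.univ : Set V) :=
    fun _ _ _ _ _ _ _ => Set.mem_univ _
  have hsink : ∃ t ∈ (Set.univ : Set V), ∀ u ∈ (Set.univ : Set V), Relation.ReflTransGen E u t :=
    ⟨b, Set.mem_univ b, fun u _ => hb u⟩
  obtain ⟨h1, -⟩ := main_bound hacyc hbin s Set.univ hs hconv hsink
  have hcard : (Set.univ : Set V).ncard = Fintype.card V := by
    rw [Set.ncard_univ, Nat.card_eq_fintype_card]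
  rw [hcard] at h1
  set h := s.height with hh
  set N := Fintype.card V with hN
  have hN1 : 1 ≤ N := Fintype.card_pos
  have hreal : ((3:ℝ)/2) ^ h ≤ N := by
    rw [div_pow, div_le_iff₀ (by positivity)]
    calc ((3:ℝ))^h = ((3^h : ℕ) : ℝ) := by push_cast; ring
      _ ≤ ((2^h * N : ℕ) : ℝ) := by exact_mod_cast h1
      _ = (N:ℝ) * 2^h := by push_cast; ring
  have hNpos : (0:ℝ) < N := by exact_mod_cast hN1
  have hlog : (h:ℝ) * Real.log (3/2) ≤ Real.log N := by
    calc (h:ℝ) * Real.log (3/2) = Real.log (((3:ℝ)/2)^h) := (Real.log_pow ((3:ℝ)/2) h).symm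
      _ ≤ Real.log N := Real.log_le_log (by positivity) hreal
  have hpos : 0 < Real.log ((3:ℝ)/2) := Real.log_pos (by norm_num)
  have h2pos : 0 < Real.log (2:ℝ) := Real.log_pos (by norm_num)
  have heq : Real.logb 2 N / Real.logb 2 (3/2) = Real.log N / Real.log (3/2) := by
    unfold Real.logb
    rw [div_div_div_cancel_right₀]
    exact ne_of_gt h2pos
  rw [heq, le_div_iff₀ hpos]
  exact hlog
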